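/- The maximization thresholds satisfy the exact balancing identity: for every real ω > 0 and every integer j with 0 ≤ j ≤ k, ω·(Σ_{i=1}^j ℓ_i + (k − j)·L − 2β) = k·(ℓ_{j+1} + 2β) − 2β. -/
import Mathlib


open Finset

/-- DTPR-max threshold values `ℓ_i`. -/
noncomputable def lMax (L β ω : ℝ) (k : ℕ) (i : ℕ) : ℝ :=
  L * (1 + (ω - 1) * (1 + ω / (k : ℝ)) ^ (i - 1))
    - 2 * β * (ω / (k : ℝ) - 1 / (k : ℝ) + 1) * (1 + ω / (k : ℝ)) ^ (i - 1)

/-- The exact balancing identity for the maximization thresholds: for every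
`ω > 0` and every `0 ≤ j ≤ k`,
`ω·(Σ_{i=1}^j ℓ_i + (k − j)·L − 2β) = k·(ℓ_{j+1} + 2β) − 2β`. -/
theorem dtpr_max_balancing_identity
    (L β : ℝ) (k : ℕ) (hk : 1 ≤ k)
    (ω : ℝ) (hω : 0 < ω)
    (j : ℕ) (hj : j ≤ k) :
    ω * ((∑ i ∈ Finset.Icc 1 j, lMax L β ω k i) + ((k : ℝ) - (j : ℝ)) * L - 2 * β)
      = (k : ℝ) * (lMax L β ω k (j + 1) + 2 * β) - 2 * β := by
  have hk0 : (k : ℝ) ≠ 0 := Nat.cast_ne_zero.mpr (by omega)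
  induction j with
  | zero =>
      simp only [Finset.Icc_eq_empty_of_lt (by norm_num : (1:ℕ) > 0), Finset.sum_empty,
        lMax, Nat.cast_zero]
      simp only [Nat.add_sub_cancel, pow_zero]
      field_simp
      ring
  | succ n ih =>
      have hn : n ≤ k := Nat.le_of_succ_le hj
      rw [Finset.sum_Icc_succ_top (by omega : 1 ≤ n + 1)]
      have IH := ih hn
      have key : ω * (lMax L β ω k (n + 1) - L)
          = (k : ℝ) * (lMax L β ω k (n + 2) - lMax L β ω k (n + 1)) := by
        simp only [lMax, Nat.add_sub_cancel, show n + 2 - 1 = n + 1 from rfl,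
          pow_succ]
        field_simp
        ring
      push_cast
      nlinarith [IH, key]
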